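/- arXiv:1103.4457 — 5 statements merged into one kernel-verified Lean document; each statement's English description precedes it below -/
import Mathlib

section
/- For every integer n ≥ 0 and every real number x, the series ∑_{k=0}^∞ x^k k^n / k! converges absolutely and equals e^x B_n(x), where B_n is the n-th Bell polynomial. Equivalently, B_n(x) = e^{−x} ∑_{k=0}^∞ x^k k^n / k!. -/
/-- Stirling numbers of the second kind, via the standard recurrence
`S(n+1, k+1) = (k+1) S(n, k+1) + S(n, k)`; `S(n,k)` counts the partitions of an
`n`-element set into `k` nonempty blocks. -/
def stirlingSecond : ℕ → ℕ → ℕ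
  | 0, 0 => 1
  | 0, _ + 1 => 0
  | _ + 1, 0 => 0
  | n + 1, k + 1 => (k + 1) * stirlingSecond n (k + 1) + stirlingSecond n k

lemma stirl_eq_zero : ∀ n k : ℕ, n < k → stirlingSecond n k = 0
  | 0, _ + 1, _ => rfl
  | n + 1, k + 1, h => by
    rw [stirlingSecond, stirl_eq_zero n (k+1) (by omega), stirl_eq_zero n k (by omega)]
    simp

lemma mul_descFactorial (k m : ℕ) :
    k * k.descFactorial m = m * k.descFactorial m + k.descFactorial (m + 1) := by
  rcases Nat.lt_or_ge k m with h | h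
  · rw [Nat.descFactorial_eq_zero_iff_lt.2 h, Nat.descFactorial_eq_zero_iff_lt.2 (by omega)]
    simp
  · rw [Nat.descFactorial_succ]
    have h2 : m * k.descFactorial m + (k - m) * k.descFactorial m
        = (m + (k - m)) * k.descFactorial m := by ring
    rw [h2]
    congr 1
    omega

lemma pow_eq_sum_desc (n k : ℕ) :
    k ^ n = ∑ m ∈ Finset.range (n + 1), stirlingSecond n m * k.descFactorial m := by
  induction n with
  | zero => simp [stirlingSecond]
  | succ n ih =>
    have key : ∑ m ∈ Finset.range (n+1), m * stirlingSecond n m * k.descFactorial m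
        = ∑ m ∈ Finset.range (n+1),
            (m+1) * stirlingSecond n (m+1) * k.descFactorial (m+1) := by
      have h1 : ∑ m ∈ Finset.range (n+2), m * stirlingSecond n m * k.descFactorial m
          = ∑ m ∈ Finset.range (n+1), m * stirlingSecond n m * k.descFactorial m := by
        rw [Finset.sum_range_succ, stirl_eq_zero n (n+1) (by omega)]
        simp
      rw [← h1, Finset.sum_range_succ']
      simp
    have lhs : k ^ (n+1) = ∑ m ∈ Finset.range (n + 1),
        (m * stirlingSecond n m * k.descFactorial m
          + stirlingSecond n m * k.descFactorial (m+1)) := by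
      rw [pow_succ, ih, Finset.sum_mul]
      refine Finset.sum_congr rfl fun m _ => ?_
      rw [show stirlingSecond n m * k.descFactorial m * k
          = stirlingSecond n m * (k * k.descFactorial m) by ring, mul_descFactorial]
      ring
    rw [lhs, Finset.sum_add_distrib, key]
    rw [Finset.sum_range_succ' (fun m => stirlingSecond (n+1) m * k.descFactorial m) (n+1)]
    simp only [stirlingSecond, Nat.descFactorial_zero, mul_one, add_mul,
      Finset.sum_add_distrib, mul_assoc]
    simp [mul_assoc]

/-- The `n`-th Bell polynomial `B_n(x) = ∑_{k=0}^n S(n,k) x^k`. -/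
noncomputable def bellPoly (n : ℕ) (x : ℝ) : ℝ :=
  ∑ k ∈ Finset.range (n + 1), (stirlingSecond n k : ℝ) * x ^ k

lemma hasSum_desc (x : ℝ) (m : ℕ) :
    HasSum (fun k : ℕ => x ^ k * (k.descFactorial m : ℝ) / (Nat.factorial k : ℝ))
      (x ^ m * Real.exp x) := by
  have hexp : HasSum (fun k : ℕ => x ^ m * (x ^ k / (Nat.factorial k : ℝ)))
      (x ^ m * Real.exp x) := by
    have h := NormedSpace.expSeries_div_hasSum_exp (𝔸 := ℝ) x
    rw [← Real.exp_eq_exp_ℝ] at h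
    exact h.mul_left _
  refine (Function.Injective.hasSum_iff (g := fun k : ℕ => k + m)
    (add_left_injective m) ?_).mp ?_
  · intro k hk
    have hkm : k < m := by
      by_contra h
      exact hk ⟨k - m, Nat.sub_add_cancel (by omega)⟩
    rw [Nat.descFactorial_eq_zero_iff_lt.2 hkm]
    simp
  · refine hexp.congr_fun fun k => ?_
    have hfact : ((Nat.factorial k : ℝ)) * (((k + m).descFactorial m : ℝ))
        = ((Nat.factorial (k + m) : ℝ)) := by
      have := Nat.factorial_mul_descFactorial (n := k + m) (k := m) (by omega)
      rw [show k + m - m = k by omega] at this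
      exact_mod_cast this
    show x ^ (k + m) * ((k + m).descFactorial m : ℝ) / (Nat.factorial (k + m) : ℝ)
        = x ^ m * (x ^ k / (Nat.factorial k : ℝ))
    rw [← hfact]
    have h1 : (Nat.factorial k : ℝ) ≠ 0 := Nat.cast_ne_zero.2 (Nat.factorial_ne_zero k)
    have h2 : (((k + m).descFactorial m : ℝ)) ≠ 0 := by
      refine Nat.cast_ne_zero.2 ?_
      simp [Nat.descFactorial_eq_zero_iff_lt]
    field_simp
    ring

/-- For every `n ≥ 0` and real `x`, the series `∑_{k≥0} x^k k^n / k!`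
converges absolutely and equals `e^x B_n(x)`. -/
theorem tsum_pow_mul_pow_div_factorial_eq_exp_mul_bellPoly (n : ℕ) (x : ℝ) :
    Summable (fun k : ℕ => |x ^ k * (k : ℝ) ^ n / (Nat.factorial k : ℝ)|) ∧
    ∑' k : ℕ, x ^ k * (k : ℝ) ^ n / (Nat.factorial k : ℝ) = Real.exp x * bellPoly n x := by
  have hpt : ∀ k : ℕ, x ^ k * (k : ℝ) ^ n / (Nat.factorial k : ℝ)
      = ∑ m ∈ Finset.range (n + 1),
          (stirlingSecond n m : ℝ) * (x ^ k * (k.descFactorial m : ℝ) / (Nat.factorial k : ℝ)) := by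
    intro k
    have h := pow_eq_sum_desc n k
    have hc : ((k : ℝ) ^ n) = ((k ^ n : ℕ) : ℝ) := by push_cast; ring
    rw [hc, h]
    push_cast
    rw [Finset.mul_sum, Finset.sum_div]
    exact Finset.sum_congr rfl fun m _ => by ring
  have hs : HasSum (fun k : ℕ => x ^ k * (k : ℝ) ^ n / (Nat.factorial k : ℝ))
      (∑ m ∈ Finset.range (n + 1), (stirlingSecond n m : ℝ) * (x ^ m * Real.exp x)) := by
    have h := hasSum_sum (s := Finset.range (n + 1))
      (f := fun m k => (stirlingSecond n m : ℝ) * (x ^ k * (k.descFactorial m : ℝ) / (Nat.factorial k : ℝ)))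
      (a := fun m => (stirlingSecond n m : ℝ) * (x ^ m * Real.exp x))
      (fun m _ => (hasSum_desc x m).mul_left _)
    exact h.congr_fun hpt
  have hval : (∑ m ∈ Finset.range (n + 1), (stirlingSecond n m : ℝ) * (x ^ m * Real.exp x))
      = Real.exp x * bellPoly n x := by
    rw [bellPoly, Finset.mul_sum]
    exact Finset.sum_congr rfl fun m _ => by ring
  exact ⟨hs.summable.abs, by rw [hs.tsum_eq, hval]⟩
end

section
/- Let k_1, k_2, k_3 be positive real constants and define f(x, y) = exp( −((k_1 − x)/(2 k_2)) · log( 1 + (k_1 − x) k_2 / (k_3 y) ) ) for real x with k_1 − x > 0 and real y > 0. Then f is strictly increasing in x (for fixed y > 0) and strictly increasing in y (for fixed x with k_1 − x > 0). -/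
/-- For positive constants `k₁, k₂, k₃`, the function
`f(x,y) = exp(−((k₁−x)/(2k₂)) log(1 + (k₁−x)k₂/(k₃ y)))`, defined for `k₁ − x > 0` and
`y > 0`, is strictly increasing in `x` and strictly increasing in `y`. -/
theorem concentration_bound_strictly_increasing
    (k₁ k₂ k₃ : ℝ) (h₁ : 0 < k₁) (h₂ : 0 < k₂) (h₃ : 0 < k₃) :
    (∀ y : ℝ, 0 < y → ∀ x₁ x₂ : ℝ, 0 < k₁ - x₁ → 0 < k₁ - x₂ → x₁ < x₂ →
      Real.exp (-((k₁ - x₁) / (2 * k₂)) * Real.log (1 + (k₁ - x₁) * k₂ / (k₃ * y)))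
        < Real.exp (-((k₁ - x₂) / (2 * k₂)) * Real.log (1 + (k₁ - x₂) * k₂ / (k₃ * y)))) ∧
    (∀ x : ℝ, 0 < k₁ - x → ∀ y₁ y₂ : ℝ, 0 < y₁ → y₁ < y₂ →
      Real.exp (-((k₁ - x) / (2 * k₂)) * Real.log (1 + (k₁ - x) * k₂ / (k₃ * y₁)))
        < Real.exp (-((k₁ - x) / (2 * k₂)) * Real.log (1 + (k₁ - x) * k₂ / (k₃ * y₂)))) := by
  constructor
  · intro y hy x₁ x₂ ha₁ ha₂ hx
    apply Real.exp_lt_exp.mpr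
    set a₁ := k₁ - x₁
    set a₂ := k₁ - x₂
    have haa : a₂ < a₁ := by simp only [a₁, a₂]; linarith
    have hc : 0 < k₂ / (k₃ * y) := by positivity
    have hlogpos : 0 < Real.log (1 + a₂ * k₂ / (k₃ * y)) := by
      apply Real.log_pos
      have : 0 < a₂ * k₂ / (k₃ * y) := by positivity
      linarith
    have hloglt : Real.log (1 + a₂ * k₂ / (k₃ * y)) ≤ Real.log (1 + a₁ * k₂ / (k₃ * y)) := by
      apply Real.log_le_log (by positivity)
      have : a₂ * k₂ / (k₃ * y) ≤ a₁ * k₂ / (k₃ * y) := by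
        apply div_le_div_of_nonneg_right ?_ (by positivity)
        nlinarith
      linarith
    have hmul : a₂ * Real.log (1 + a₂ * k₂ / (k₃ * y))
        < a₁ * Real.log (1 + a₁ * k₂ / (k₃ * y)) := by
      apply mul_lt_mul haa hloglt hlogpos (le_of_lt ha₁)
    have h2k : 0 < 2 * k₂ := by positivity
    rw [neg_mul, neg_mul, neg_lt_neg_iff, div_mul_eq_mul_div, div_mul_eq_mul_div,
      div_lt_div_iff₀ h2k h2k]
    nlinarith
  · intro x ha y₁ y₂ hy₁ hy
    apply Real.exp_lt_exp.mpr
    set a := k₁ - x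
    have hy₂ : 0 < y₂ := lt_trans hy₁ hy
    have hloglt : Real.log (1 + a * k₂ / (k₃ * y₂)) < Real.log (1 + a * k₂ / (k₃ * y₁)) := by
      apply Real.log_lt_log (by positivity)
      have : a * k₂ / (k₃ * y₂) < a * k₂ / (k₃ * y₁) := by
        apply div_lt_div_of_pos_left (by positivity) (by positivity)
        exact mul_lt_mul_of_pos_left hy h₃
      linarith
    have hcoef : -(a / (2 * k₂)) < 0 := by
      have : 0 < a / (2 * k₂) := by positivity
      linarith
    exact mul_lt_mul_of_neg_left hloglt hcoef
end

section
/- For every integer n ≥ 1, the following identity holds: ∑_{j=⌈(n+1)/2⌉}^{n} [ 2 ∑_{i=n−j+1}^{j} (−1)^{i+j} n / ( (n−j)! (n−i)! (i+j−n)! ) − n / ( ((n−j)!)^2 (2j−n)! ) ] = (−1)^n (1 − 2^n) / (n−1)!. -/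
open Finset

lemma aux_B (m : ℕ) (hm : 1 ≤ m) :
    ∑ a ∈ Finset.range m, (-1:ℝ)^a / (Nat.factorial a * Nat.factorial (m-a))
      = -(-1:ℝ)^m / Nat.factorial m := by
  have key : ∑ a ∈ Finset.range (m+1), (-1:ℝ)^a * (m.choose a : ℝ) = 0 := by
    have h := Int.alternating_sum_range_choose (n := m)
    rw [if_neg (by omega)] at h
    have h2 := congrArg (fun z : ℤ => (z : ℝ)) h
    push_cast at h2
    simpa using h2
  have key2 : ∑ a ∈ Finset.range m, (-1:ℝ)^a * (m.choose a : ℝ) = -(-1:ℝ)^m := by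
    rw [Finset.sum_range_succ, Nat.choose_self] at key
    push_cast at key
    linarith
  have step : ∀ a ∈ Finset.range m,
      (-1:ℝ)^a / (Nat.factorial a * Nat.factorial (m-a))
        = (-1:ℝ)^a * (m.choose a : ℝ) / Nat.factorial m := by
    intro a ha
    have ham : a ≤ m := le_of_lt (Finset.mem_range.mp ha)
    have hc := Nat.choose_mul_factorial_mul_factorial ham
    have hc' : ((m.choose a : ℝ)) * (Nat.factorial a : ℝ) * (Nat.factorial (m-a) : ℝ)
        = (Nat.factorial m : ℝ) := by exact_mod_cast congrArg (fun k : ℕ => (k : ℝ)) hc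
    have h1 : (Nat.factorial a : ℝ) ≠ 0 := Nat.cast_ne_zero.mpr (Nat.factorial_ne_zero a)
    have h2 : (Nat.factorial (m-a) : ℝ) ≠ 0 := Nat.cast_ne_zero.mpr (Nat.factorial_ne_zero _)
    have h3 : (Nat.factorial m : ℝ) ≠ 0 := Nat.cast_ne_zero.mpr (Nat.factorial_ne_zero m)
    field_simp
    linear_combination (-1:ℝ) * hc'
  rw [Finset.sum_congr rfl step, ← Finset.sum_div, key2]

lemma aux_C (n : ℕ) :
    ∑ j ∈ Finset.range (n+1), (1:ℝ)/(Nat.factorial j * Nat.factorial (n-j))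
      = 2^n / Nat.factorial n := by
  have key : ∑ j ∈ Finset.range (n+1), ((n.choose j : ℝ)) = 2^n := by
    exact_mod_cast congrArg (fun k : ℕ => (k : ℝ)) (Nat.sum_range_choose n)
  have step : ∀ j ∈ Finset.range (n+1),
      (1:ℝ)/(Nat.factorial j * Nat.factorial (n-j)) = (n.choose j : ℝ) / Nat.factorial n := by
    intro j hj
    have hjn : j ≤ n := Nat.lt_succ_iff.mp (Finset.mem_range.mp hj)
    have hc := Nat.choose_mul_factorial_mul_factorial hjn
    have hc' : ((n.choose j : ℝ)) * (Nat.factorial j : ℝ) * (Nat.factorial (n-j) : ℝ)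
        = (Nat.factorial n : ℝ) := by exact_mod_cast congrArg (fun k : ℕ => (k : ℝ)) hc
    have h1 : (Nat.factorial j : ℝ) ≠ 0 := Nat.cast_ne_zero.mpr (Nat.factorial_ne_zero j)
    have h2 : (Nat.factorial (n-j) : ℝ) ≠ 0 := Nat.cast_ne_zero.mpr (Nat.factorial_ne_zero _)
    have h3 : (Nat.factorial n : ℝ) ≠ 0 := Nat.cast_ne_zero.mpr (Nat.factorial_ne_zero n)
    field_simp
    linear_combination (-1:ℝ) * hc'
  rw [Finset.sum_congr rfl step, ← Finset.sum_div, key]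

/-- auxiliary summand, zero off the region `i + j ≥ n + 1`. -/
noncomputable def Faux (n i j : ℕ) : ℝ :=
  if n + 1 ≤ i + j then
    (-1:ℝ)^(i+j) * (n:ℝ) / ((Nat.factorial (n-j) : ℝ) * (Nat.factorial (n-i) : ℝ)
      * (Nat.factorial (i+j-n) : ℝ))
  else 0

lemma Faux_symm (n i j : ℕ) : Faux n i j = Faux n j i := by
  unfold Faux
  rw [add_comm i j]
  split_ifs with h
  · ring
  · rfl

lemma Faux_pos (n i j : ℕ) (h : n + 1 ≤ i + j) :
    Faux n i j = (-1:ℝ)^(i+j) * (n:ℝ) / ((Nat.factorial (n-j) : ℝ)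
      * (Nat.factorial (n-i) : ℝ) * (Nat.factorial (i+j-n) : ℝ)) := if_pos h

lemma Faux_neg (n i j : ℕ) (h : ¬ (n + 1 ≤ i + j)) : Faux n i j = 0 := if_neg h

/-- For every `n ≥ 1`,
`∑_{j=⌈(n+1)/2⌉}^{n} [ 2 ∑_{i=n−j+1}^{j} (−1)^{i+j} n / ((n−j)! (n−i)! (i+j−n)!)
  − n / (((n−j)!)² (2j−n)!) ] = (−1)^n (1 − 2^n)/(n−1)!`.
(Here `⌈(n+1)/2⌉ = (n+2)/2` as a natural-number division.) -/
theorem alpha_coefficient_identity (n : ℕ) (hn : 1 ≤ n) :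
    ∑ j ∈ Finset.Icc ((n + 2) / 2) n,
      (2 * ∑ i ∈ Finset.Icc (n - j + 1) j,
          (-1 : ℝ) ^ (i + j) * (n : ℝ)
            / ((Nat.factorial (n - j) : ℝ) * (Nat.factorial (n - i) : ℝ)
                * (Nat.factorial (i + j - n) : ℝ))
        - (n : ℝ) / ((Nat.factorial (n - j) : ℝ) ^ 2 * (Nat.factorial (2 * j - n) : ℝ)))
      = (-1 : ℝ) ^ n * (1 - 2 ^ n) / (Nat.factorial (n - 1) : ℝ) := by
  set U : ℝ := ∑ j ∈ Finset.Ico 1 (n+1), ∑ i ∈ Finset.Ico 1 (j+1), Faux n i j with hU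
  set D : ℝ := ∑ j ∈ Finset.Ico 1 (n+1), Faux n j j with hD
  set SQ : ℝ := ∑ j ∈ Finset.Ico 1 (n+1), ∑ i ∈ Finset.Ico 1 (n+1), Faux n i j with hSQ
  -- lower triangle equals upper triangle by symmetry
  have hL : (∑ j ∈ Finset.Ico 1 (n+1), ∑ i ∈ Finset.Ico j (n+1), Faux n i j) = U := by
    have h := Finset.sum_Ico_Ico_comm 1 (n+1) (fun j i => Faux n i j)
    rw [h, hU]
    exact Finset.sum_congr rfl (fun j _ => Finset.sum_congr rfl (fun i _ => Faux_symm n j i))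
  -- full square = 2 U - D
  have hsq : SQ = 2 * U - D := by
    have hper : ∀ j ∈ Finset.Ico 1 (n+1),
        (∑ i ∈ Finset.Ico 1 (n+1), Faux n i j)
          = ((∑ i ∈ Finset.Ico 1 (j+1), Faux n i j) - Faux n j j)
            + ∑ i ∈ Finset.Ico j (n+1), Faux n i j := by
      intro j hj
      obtain ⟨hj1, hj2⟩ := Finset.mem_Ico.mp hj
      rw [← Finset.sum_Ico_consecutive (fun i => Faux n i j) hj1 (le_of_lt hj2)]
      rw [Finset.sum_Ico_succ_top hj1]
      ring
    rw [hSQ, Finset.sum_congr rfl hper, Finset.sum_add_distrib, Finset.sum_sub_distrib, hL]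
    rw [← hU, ← hD]
    ring
  -- the given LHS equals SQ
  have hIccSub : Finset.Icc ((n+2)/2) n ⊆ Finset.Ico 1 (n+1) := by
    intro j hj
    simp only [Finset.mem_Icc, Finset.mem_Ico] at hj ⊢
    omega
  have hUIcc : U = ∑ j ∈ Finset.Icc ((n+2)/2) n,
      ∑ i ∈ Finset.Icc (n - j + 1) j,
        (-1 : ℝ) ^ (i + j) * (n : ℝ)
          / ((Nat.factorial (n - j) : ℝ) * (Nat.factorial (n - i) : ℝ)
              * (Nat.factorial (i + j - n) : ℝ)) := by
    rw [hU, ← Finset.sum_subset hIccSub]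
    · refine Finset.sum_congr rfl (fun j hj => ?_)
      obtain ⟨hj1, hj2⟩ := Finset.mem_Icc.mp hj
      have hsub : Finset.Icc (n - j + 1) j ⊆ Finset.Ico 1 (j+1) := by
        intro i hi
        simp only [Finset.mem_Icc, Finset.mem_Ico] at hi ⊢
        omega
      rw [← Finset.sum_subset hsub]
      · refine Finset.sum_congr rfl (fun i hi => ?_)
        obtain ⟨hi1, hi2⟩ := Finset.mem_Icc.mp hi
        exact Faux_pos n i j (by omega)
      · intro i hi hni
        simp only [Finset.mem_Icc, Finset.mem_Ico] at hi hni
        exact Faux_neg n i j (by omega)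
    · intro j hj hnj
      simp only [Finset.mem_Icc, Finset.mem_Ico] at hj hnj
      refine Finset.sum_eq_zero (fun i hi => ?_)
      simp only [Finset.mem_Ico] at hi
      exact Faux_neg n i j (by omega)
  have hDIcc : D = ∑ j ∈ Finset.Icc ((n+2)/2) n,
      (n : ℝ) / ((Nat.factorial (n - j) : ℝ) ^ 2 * (Nat.factorial (2 * j - n) : ℝ)) := by
    rw [hD, ← Finset.sum_subset hIccSub]
    · refine Finset.sum_congr rfl (fun j hj => ?_)
      obtain ⟨hj1, hj2⟩ := Finset.mem_Icc.mp hj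
      rw [Faux_pos n j j (by omega)]
      have hsgn : (-1:ℝ)^(j+j) = 1 := by
        rw [← two_mul, pow_mul]; norm_num
      have h2 : j + j - n = 2 * j - n := by omega
      rw [hsgn, h2]
      ring
    · intro j hj hnj
      simp only [Finset.mem_Icc, Finset.mem_Ico] at hj hnj
      exact Faux_neg n j j (by omega)
  have hLHS : ∑ j ∈ Finset.Icc ((n + 2) / 2) n,
      (2 * ∑ i ∈ Finset.Icc (n - j + 1) j,
          (-1 : ℝ) ^ (i + j) * (n : ℝ)
            / ((Nat.factorial (n - j) : ℝ) * (Nat.factorial (n - i) : ℝ)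
                * (Nat.factorial (i + j - n) : ℝ))
        - (n : ℝ) / ((Nat.factorial (n - j) : ℝ) ^ 2 * (Nat.factorial (2 * j - n) : ℝ)))
      = SQ := by
    rw [hsq, hUIcc, hDIcc, Finset.sum_sub_distrib, Finset.mul_sum]
  rw [hLHS]
  -- Now compute SQ
  have hinner : ∀ j ∈ Finset.Ico 1 (n+1),
      (∑ i ∈ Finset.Ico 1 (n+1), Faux n i j)
        = (-1:ℝ)^(n+1) * (n:ℝ)
            * (1 / ((Nat.factorial (n-j) : ℝ) * (Nat.factorial j : ℝ))) := by
    intro j hj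
    obtain ⟨hj1, hj2'⟩ := Finset.mem_Ico.mp hj
    have hj2 : j ≤ n := by omega
    have hsub : Finset.Icc (n + 1 - j) n ⊆ Finset.Ico 1 (n+1) := by
      intro i hi
      simp only [Finset.mem_Icc, Finset.mem_Ico] at hi ⊢
      omega
    rw [← Finset.sum_subset hsub]
    · have hbij : ∑ i ∈ Finset.Icc (n + 1 - j) n, Faux n i j
          = ∑ a ∈ Finset.range j,
              ((-1:ℝ)^(n+j) * (n:ℝ) / (Nat.factorial (n-j) : ℝ))
                * ((-1:ℝ)^a / ((Nat.factorial a : ℝ) * (Nat.factorial (j-a) : ℝ))) := by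
        refine Finset.sum_nbij' (fun i => n - i) (fun a => n - a) ?_ ?_ ?_ ?_ ?_
        · intro i hi
          simp only [Finset.mem_Icc, Finset.mem_range] at hi ⊢
          omega
        · intro a ha
          simp only [Finset.mem_Icc, Finset.mem_range] at ha ⊢
          omega
        · intro i hi
          simp only [Finset.mem_Icc] at hi
          show n - (n - i) = i
          omega
        · intro a ha
          simp only [Finset.mem_range] at ha
          show n - (n - a) = a
          omega
        · intro i hi
          simp only [Finset.mem_Icc] at hi
          obtain ⟨hi1, hi2⟩ := hi
          show Faux n i j = ((-1:ℝ)^(n+j) * (n:ℝ) / (Nat.factorial (n-j) : ℝ))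
              * ((-1:ℝ)^(n-i) / ((Nat.factorial (n-i) : ℝ) * (Nat.factorial (j-(n-i)) : ℝ)))
          rw [Faux_pos n i j (by omega)]
          have e3 : j - (n - i) = i + j - n := by omega
          rw [e3]
          have hsgn : (-1:ℝ)^(n+j) * (-1:ℝ)^(n-i) = (-1:ℝ)^(i+j) := by
            rw [← pow_add]
            have e4 : (n + j + (n - i)) = (i + j) + 2*(n - i) := by omega
            rw [e4, pow_add, pow_mul]
            norm_num
          rw [div_mul_div_comm]
          rw [show ((-1:ℝ)^(n+j) * (n:ℝ)) * ((-1:ℝ)^(n-i)) = (-1:ℝ)^(i+j) * n from by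
            linear_combination (n:ℝ) * hsgn]
          ring
      rw [hbij, ← Finset.mul_sum, aux_B j hj1]
      have hsgn2 : (-1:ℝ)^(n+j) * (-(-1:ℝ)^j) = (-1:ℝ)^(n+1) := by
        have e5 : (-1:ℝ)^(n+j) * (-1:ℝ)^j = (-1:ℝ)^(n + 2*j) := by
          rw [← pow_add]; ring_nf
        have e6 : (-1:ℝ)^(n + 2*j) = (-1:ℝ)^n := by
          rw [pow_add, pow_mul]; norm_num
        have e7 : (-1:ℝ)^(n+1) = -(-1:ℝ)^n := by rw [pow_succ]; ring
        rw [e7]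
        linear_combination (-1:ℝ) * e5 - e6
      rw [div_mul_div_comm]
      rw [show ((-1:ℝ)^(n+j) * (n:ℝ)) * (-(-1:ℝ)^j) = (-1:ℝ)^(n+1) * n from by
        linear_combination (n:ℝ) * hsgn2]
      ring
    · intro i hi hni
      simp only [Finset.mem_Icc, Finset.mem_Ico] at hi hni
      exact Faux_neg n i j (by omega)
  rw [hSQ, Finset.sum_congr rfl hinner, ← Finset.mul_sum]
  have hC' : ∑ j ∈ Finset.Ico 0 (n+1),
      (1:ℝ)/((Nat.factorial (n-j):ℝ) * (Nat.factorial j:ℝ)) = 2^n / Nat.factorial n := by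
    rw [← Finset.range_eq_Ico, ← aux_C n]
    exact Finset.sum_congr rfl (fun j _ => by rw [mul_comm])
  have h0 := Finset.sum_eq_sum_Ico_succ_bot (show 0 < n+1 by omega)
    (fun j => (1:ℝ)/((Nat.factorial (n-j):ℝ) * (Nat.factorial j:ℝ)))
  rw [h0] at hC'
  simp only [Nat.sub_zero, Nat.factorial_zero, Nat.cast_one, mul_one] at hC'
  have hsum : ∑ j ∈ Finset.Ico 1 (n+1),
      (1:ℝ)/((Nat.factorial (n-j):ℝ) * (Nat.factorial j:ℝ))
        = 2^n / Nat.factorial n - 1 / Nat.factorial n := by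
    linarith
  rw [hsum]
  have hfac : (n:ℝ) * (Nat.factorial (n-1) : ℝ) = (Nat.factorial n : ℝ) := by
    exact_mod_cast congrArg (fun k : ℕ => (k : ℝ)) (Nat.mul_factorial_pred (by omega))
  have h1 : (Nat.factorial n : ℝ) ≠ 0 := Nat.cast_ne_zero.mpr (Nat.factorial_ne_zero n)
  have h2 : (Nat.factorial (n-1) : ℝ) ≠ 0 := Nat.cast_ne_zero.mpr (Nat.factorial_ne_zero _)
  have hsgn3 : (-1:ℝ)^(n+1) = -(-1:ℝ)^n := by rw [pow_succ]; ring
  rw [hsgn3]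
  field_simp
  ring_nf
  linear_combination (1 - (2:ℝ)^n) * hfac
end

section
/- For every integer n ≥ 1 define β_n = ∑_{j=⌈(n+1)/2⌉}^{n} [ 2 ∑_{i=n−j+1}^{j} (−1)^{i+j} · 2 (n−i)(n−j) / ( (n−j)! (n−i)! (i+j−n+1)! ) − 2 (n−j)^2 / ( ((n−j)!)^2 (2j−n+1)! ) ]. Then for every real number x, the series ∑_{n=1}^∞ β_n x^n converges absolutely and equals 2x e^{−x} − 2(x + x^2) e^{−2x}. -/
/-- The coefficient `β_n` of Theorem "variance of χ in dimension one":
`β_n = ∑_{j=⌈(n+1)/2⌉}^{n} [ 2 ∑_{i=n−j+1}^{j} (−1)^{i+j} 2(n−i)(n−j) /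
((n−j)!(n−i)!(i+j−n+1)!) − 2(n−j)²/(((n−j)!)²(2j−n+1)!) ]`. -/
noncomputable def betaCoeff (n : ℕ) : ℝ :=
  ∑ j ∈ Finset.Icc ((n + 2) / 2) n,
    (2 * ∑ i ∈ Finset.Icc (n - j + 1) j,
        (-1 : ℝ) ^ (i + j) * (2 * ((n - i : ℕ) : ℝ) * ((n - j : ℕ) : ℝ))
          / ((Nat.factorial (n - j) : ℝ) * (Nat.factorial (n - i) : ℝ)
              * (Nat.factorial (i + j - n + 1) : ℝ))
      - 2 * ((n - j : ℕ) : ℝ) ^ 2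
          / ((Nat.factorial (n - j) : ℝ) ^ 2 * (Nat.factorial (2 * j - n + 1) : ℝ)))

open Finset

private lemma inv_fact_sum (k : ℕ) :
    ∑ c ∈ range (k+1), (1:ℝ)/(c.factorial * (k-c).factorial) = 2^k / k.factorial := by
  have h : ∀ c ∈ range (k+1), (1:ℝ)/(c.factorial * (k-c).factorial)
      = (k.choose c : ℝ) / k.factorial := by
    intro c hc
    rw [mem_range] at hc
    rw [Nat.cast_choose ℝ (by omega : c ≤ k)]
    field_simp
  rw [Finset.sum_congr rfl h, ← Finset.sum_div]
  norm_cast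
  rw [Nat.sum_range_choose]

private lemma sum_ab (m : ℕ) :
    ∑ a ∈ range (m+3), (a:ℝ) * ((m+2-a : ℕ):ℝ) / (a.factorial * (m+2-a).factorial)
      = 2^m / m.factorial := by
  rw [Finset.sum_range_succ', Finset.sum_range_succ]
  have h1 : ((m+2) - (m+1+1) : ℕ) = 0 := by omega
  have h2 : ∀ a ∈ range (m+1), (((a+1):ℕ):ℝ) * ((m+2-(a+1) : ℕ):ℝ)
      / ((a+1).factorial * (m+2-(a+1)).factorial)
      = (1:ℝ)/(a.factorial * (m-a).factorial) := by
    intro a ha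
    rw [mem_range] at ha
    have e1 : m + 2 - (a+1) = (m - a) + 1 := by omega
    rw [e1, Nat.factorial_succ, Nat.factorial_succ]
    push_cast
    have : (m:ℝ) - a + 1 ≠ 0 := by
      have : ((m-a:ℕ):ℝ) = (m:ℝ) - a := by push_cast [Nat.cast_sub (by omega : a ≤ m)]; ring
      rw [← this]; positivity
    field_simp
  rw [Finset.sum_congr rfl h2, inv_fact_sum]
  simp [h1]

private lemma binom_sum (n : ℕ) :
    ∑ k ∈ range (n+1), 2*(-2:ℝ)^k/(k.factorial * (n-k).factorial)
      = 2*(-1)^n/n.factorial := by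
  have h : ∀ k ∈ range (n+1), 2*(-2:ℝ)^k/(k.factorial * (n-k).factorial)
      = (2 / n.factorial) * ((-2:ℝ)^k * (1:ℝ)^(n-k) * (n.choose k : ℝ)) := by
    intro k hk
    rw [mem_range] at hk
    rw [Nat.cast_choose ℝ (by omega : k ≤ n), one_pow]
    have h1 : (k.factorial : ℝ) ≠ 0 := by positivity
    have h2 : ((n-k).factorial : ℝ) ≠ 0 := by positivity
    have h3 : (n.factorial : ℝ) ≠ 0 := by positivity
    field_simp
  rw [Finset.sum_congr rfl h, ← Finset.mul_sum, ← add_pow]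
  norm_num
  ring

private lemma neg_one_pow_sub {m n : ℕ} (h : m ≤ 2*n) : ((-1:ℝ))^(2*n - m) = (-1)^m := by
  have h1 : ((-1:ℝ))^(2*n-m) * (-1)^m = (-1)^(2*n) := by
    rw [← pow_add]; congr 1; omega
  have h2 : ((-1:ℝ))^(2*n) = 1 := by rw [pow_mul]; norm_num
  have h3 : ((-1:ℝ))^m * (-1)^m = 1 := by
    rw [← pow_add, ← two_mul, pow_mul]; norm_num
  calc ((-1:ℝ))^(2*n-m) = (-1)^(2*n-m) * ((-1)^m * (-1)^m) := by rw [h3, mul_one]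
    _ = ((-1:ℝ))^(2*n-m) * (-1)^m * (-1)^m := by ring
    _ = (-1)^m := by rw [h1, h2, one_mul]

/-- the symmetric summand -/
noncomputable def ttFn (n i j : ℕ) : ℝ :=
  (-1 : ℝ) ^ (i + j) * (2 * ((n - i : ℕ) : ℝ) * ((n - j : ℕ) : ℝ))
    / ((Nat.factorial (n - j) : ℝ) * (Nat.factorial (n - i) : ℝ)
        * (Nat.factorial (i + j - n + 1) : ℝ))

lemma ttFn_symm (n i j : ℕ) : ttFn n i j = ttFn n j i := by
  unfold ttFn
  rw [add_comm j i]
  ring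

/-- Step 1+2+3+4: betaCoeff as a sum over the triangle region -/
lemma betaCoeff_eq_region (n : ℕ) :
    betaCoeff n = ∑ p ∈ (Icc 1 n ×ˢ Icc 1 n).filter (fun p => n+1 ≤ p.1 + p.2),
      ttFn n p.1 p.2 := by
  have step1 : betaCoeff n = ∑ j ∈ Icc ((n+2)/2) n,
      ((∑ i ∈ Icc (n-j+1) j, ttFn n i j) + ∑ i ∈ Icc (n-j+1) (j-1), ttFn n i j) := by
    unfold betaCoeff
    refine Finset.sum_congr rfl fun j hj => ?_
    rw [mem_Icc] at hj
    have hj1 : 1 ≤ j := by omega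
    have hj2 : n - j + 1 ≤ (j - 1) + 1 := by omega
    have hsplit : ∑ i ∈ Icc (n-j+1) j, ttFn n i j
        = (∑ i ∈ Icc (n-j+1) (j-1), ttFn n i j) + ttFn n j j := by
      have : j = (j - 1) + 1 := by omega
      rw [this, Finset.sum_Icc_succ_top (by omega : n - ((j-1)+1) + 1 ≤ (j-1)+1), ← this]
    have hdiag : ttFn n j j = 2 * ((n - j : ℕ) : ℝ) ^ 2
        / ((Nat.factorial (n - j) : ℝ) ^ 2 * (Nat.factorial (2 * j - n + 1) : ℝ)) := by
      unfold ttFn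
      have e1 : j + j - n + 1 = 2 * j - n + 1 := by omega
      have e2 : ((-1:ℝ))^(j+j) = 1 := by
        rw [← two_mul, pow_mul]; norm_num
      rw [e1, e2]
      ring
    have : ∑ i ∈ Icc (n-j+1) j,
        (-1 : ℝ) ^ (i + j) * (2 * ((n - i : ℕ) : ℝ) * ((n - j : ℕ) : ℝ))
          / ((Nat.factorial (n - j) : ℝ) * (Nat.factorial (n - i) : ℝ)
              * (Nat.factorial (i + j - n + 1) : ℝ))
        = ∑ i ∈ Icc (n-j+1) j, ttFn n i j := rfl
    rw [this, hsplit, hdiag]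
    ring
  have hT1 : ∑ j ∈ Icc ((n+2)/2) n, ∑ i ∈ Icc (n-j+1) j, ttFn n i j
      = ∑ p ∈ (Icc 1 n ×ˢ Icc 1 n).filter (fun p => n+1 ≤ p.1 + p.2 ∧ p.1 ≤ p.2),
        ttFn n p.1 p.2 := by
    rw [← Finset.sum_sigma (Icc ((n+2)/2) n) (fun j => Icc (n-j+1) j)
      (fun p => ttFn n p.2 p.1)]
    refine Finset.sum_nbij' (fun p => (p.2, p.1)) (fun p => ⟨p.2, p.1⟩) ?_ ?_ ?_ ?_ ?_
    · rintro ⟨j, i⟩ hp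
      simp only [Finset.mem_sigma, mem_Icc] at hp
      simp only [mem_filter, mem_product, mem_Icc]
      omega
    · rintro ⟨i, j⟩ hp
      simp only [mem_filter, mem_product, mem_Icc] at hp
      simp only [Finset.mem_sigma, mem_Icc]
      omega
    · rintro ⟨j, i⟩ _; rfl
    · rintro ⟨i, j⟩ _; rfl
    · rintro ⟨j, i⟩ _; rfl
  have hT2 : ∑ j ∈ Icc ((n+2)/2) n, ∑ i ∈ Icc (n-j+1) (j-1), ttFn n i j
      = ∑ p ∈ (Icc 1 n ×ˢ Icc 1 n).filter (fun p => n+1 ≤ p.1 + p.2 ∧ ¬ p.1 ≤ p.2),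
        ttFn n p.1 p.2 := by
    rw [← Finset.sum_sigma (Icc ((n+2)/2) n) (fun j => Icc (n-j+1) (j-1))
      (fun p => ttFn n p.2 p.1)]
    refine Finset.sum_nbij' (fun p => (p.1, p.2)) (fun p => ⟨p.1, p.2⟩) ?_ ?_ ?_ ?_ ?_
    · rintro ⟨j, i⟩ hp
      simp only [Finset.mem_sigma, mem_Icc] at hp
      simp only [mem_filter, mem_product, mem_Icc]
      omega
    · rintro ⟨i, j⟩ hp
      simp only [mem_filter, mem_product, mem_Icc] at hp
      simp only [Finset.mem_sigma, mem_Icc]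
      omega
    · rintro ⟨j, i⟩ _; rfl
    · rintro ⟨i, j⟩ _; rfl
    · rintro ⟨j, i⟩ _
      exact ttFn_symm n i j
  rw [step1, Finset.sum_add_distrib, hT1, hT2]
  rw [← Finset.sum_filter_add_sum_filter_not
    ((Icc 1 n ×ˢ Icc 1 n).filter (fun p => n+1 ≤ p.1 + p.2)) (fun p => p.1 ≤ p.2),
    Finset.filter_filter, Finset.filter_filter]

lemma betaCoeff_eq_msum (n : ℕ) :
    betaCoeff n = ∑ m ∈ range n, ∑ a ∈ range (m+1),
      (-1:ℝ)^m * (2 * a * ((m-a:ℕ):ℝ)) / (a.factorial * (m-a).factorial * (n-m+1).factorial) := by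
  rw [betaCoeff_eq_region]
  rw [← Finset.sum_sigma (range n) (fun m => range (m+1))
    (fun p => (-1:ℝ)^p.1 * (2 * p.2 * ((p.1-p.2:ℕ):ℝ))
      / (Nat.factorial p.2 * (p.1-p.2).factorial * (n-p.1+1).factorial))]
  refine (Finset.sum_nbij' (fun p => (n - p.2, n - (p.1 - p.2)))
    (fun p => (⟨2*n - p.1 - p.2, n - p.1⟩ : Σ _ : ℕ, ℕ)) ?_ ?_ ?_ ?_ ?_).symm
  · rintro ⟨m, a⟩ hp
    simp only [Finset.mem_sigma, mem_range] at hp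
    simp only [mem_filter, mem_product, mem_Icc]
    omega
  · rintro ⟨i, j⟩ hp
    simp only [mem_filter, mem_product, mem_Icc] at hp
    simp only [Finset.mem_sigma, mem_range]
    omega
  · rintro ⟨m, a⟩ hp
    simp only [Finset.mem_sigma, mem_range] at hp
    show (⟨2*n - (n-a) - (n-(m-a)), n - (n-a)⟩ : Σ _ : ℕ, ℕ) = ⟨m, a⟩
    have h1 : 2*n - (n - a) - (n - (m - a)) = m := by omega
    have h2 : n - (n - a) = a := by omega
    rw [h1, h2]
  · rintro ⟨i, j⟩ hp
    simp only [mem_filter, mem_product, mem_Icc] at hp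
    simp only [Prod.mk.injEq]
    constructor <;> omega
  · rintro ⟨m, a⟩ hp
    simp only [Finset.mem_sigma, mem_range] at hp
    unfold ttFn
    simp only
    have e1 : n - (n - a) = a := by omega
    have e2 : n - (n - (m - a)) = m - a := by omega
    have e3 : (n - a) + (n - (m - a)) - n + 1 = n - m + 1 := by omega
    have e4 : ((-1:ℝ))^((n-a) + (n-(m-a))) = (-1)^m := by
      have : (n-a) + (n-(m-a)) = 2*n - m := by omega
      rw [this, neg_one_pow_sub (by omega : m ≤ 2*n)]
    rw [e1, e2, e3, e4]
    ring

lemma betaCoeff_succ (n : ℕ) :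
    betaCoeff (n+1) = ∑ k ∈ range (n-1), 2*(-2:ℝ)^k/(k.factorial * (n-k).factorial) := by
  rw [betaCoeff_eq_msum]
  have hG : ∀ m ∈ range (n+1), (∑ a ∈ range (m+1),
      (-1:ℝ)^m * (2 * a * ((m-a:ℕ):ℝ))
        / (a.factorial * (m-a).factorial * ((n+1)-m+1).factorial))
      = if 2 ≤ m then 2*(-2:ℝ)^(m-2)/((m-2).factorial * (n-(m-2)).factorial) else 0 := by
    intro m hm
    rw [mem_range] at hm
    rcases Nat.lt_or_ge m 2 with h2 | h2
    · interval_cases m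
      · simp
      · norm_num [Finset.sum_range_succ]
    · obtain ⟨m', rfl⟩ : ∃ m', m = m' + 2 := ⟨m - 2, by omega⟩
      have hC : (n+1) - (m'+2) + 1 = n - m' := by omega
      rw [hC, if_pos (by omega)]
      have hterm : ∀ a ∈ range (m'+2+1), (-1:ℝ)^(m'+2) * (2 * a * (((m'+2)-a:ℕ):ℝ))
          / (a.factorial * ((m'+2)-a).factorial * (n-m').factorial)
          = ((-1:ℝ)^(m'+2) * 2 / (n-m').factorial) *
            ((a:ℝ) * (((m'+2)-a:ℕ):ℝ) / (a.factorial * ((m'+2)-a).factorial)) := by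
        intro a ha
        have h1 : ((a.factorial:ℝ)) ≠ 0 := by positivity
        have h2 : ((((m'+2)-a).factorial:ℝ)) ≠ 0 := by positivity
        have h3 : (((n-m').factorial:ℝ)) ≠ 0 := by positivity
        field_simp
      rw [Finset.sum_congr rfl hterm, ← Finset.mul_sum]
      have e : range (m'+2+1) = range (m'+3) := by congr 1
      rw [e, sum_ab m']
      have h4 : ((-2:ℝ))^m' = (-1)^m' * 2^m' := by
        rw [show ((-2:ℝ)) = (-1)*2 by norm_num, mul_pow]
      have h5 : ((-1:ℝ))^(m'+2) = (-1)^m' := by rw [pow_add]; norm_num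
      have e2 : (m'+2) - 2 = m' := by omega
      rw [h5, e2, h4]
      have h1 : ((m'.factorial:ℝ)) ≠ 0 := by positivity
      have h3 : (((n-m').factorial:ℝ)) ≠ 0 := by positivity
      field_simp
  rw [Finset.sum_congr rfl hG]
  match n with
  | 0 => simp
  | (n''+1) =>
    rw [Finset.sum_range_succ', Finset.sum_range_succ']
    norm_num
    refine Finset.sum_congr rfl fun k _ => ?_
    have e3 : k + 1 + 1 - 2 = k := by omega
    rw [e3]

lemma betaCoeff_closed (n : ℕ) :
    betaCoeff (n+1) = 2*(-1:ℝ)^n/n.factorial - 2*(-2:ℝ)^n/n.factorial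
      - (if n = 0 then 0 else 2*(-2:ℝ)^(n-1)/(n-1).factorial) := by
  rw [betaCoeff_succ]
  match n with
  | 0 => simp
  | (n'+1) =>
    have key := binom_sum (n'+1)
    rw [Finset.sum_range_succ, Finset.sum_range_succ] at key
    have e1 : n' + 1 - n' = 1 := by omega
    have e2 : n' + 1 - (n' + 1) = 0 := by omega
    rw [e1, e2] at key
    simp only [Nat.factorial_one, Nat.factorial_zero, Nat.cast_one, mul_one] at key
    rw [if_neg (by omega : ¬ (n'+1) = 0)]
    have e3 : n' + 1 - 1 = n' := by omega
    rw [e3]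
    linarith [key]

/-- For every real `x` the series `∑_{n≥1} β_n x^n` converges
absolutely and equals `2x e^{−x} − 2(x + x²) e^{−2x}`. -/
theorem betaCoeff_series_sum (x : ℝ) :
    Summable (fun n : ℕ => |betaCoeff (n + 1) * x ^ (n + 1)|) ∧
    ∑' n : ℕ, betaCoeff (n + 1) * x ^ (n + 1)
      = 2 * x * Real.exp (-x) - 2 * (x + x ^ 2) * Real.exp (-(2 * x)) := by
  have expf : ∀ y : ℝ, (∑' n : ℕ, y^n / n.factorial) = Real.exp y := by
    intro y
    rw [Real.exp_eq_exp_ℝ, NormedSpace.exp_eq_tsum_div]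
  have hg : ∀ n : ℕ, betaCoeff (n+1) * x^(n+1)
      = 2*x*((-x)^n/n.factorial) - 2*x*((-2*x)^n/n.factorial)
        - (if n = 0 then 0 else 2*x^2*((-2*x)^(n-1)/(n-1).factorial)) := by
    intro n
    rw [betaCoeff_closed]
    rcases eq_or_ne n 0 with rfl | hn
    · norm_num
    · rw [if_neg hn, if_neg hn]
      obtain ⟨m, rfl⟩ : ∃ m, n = m + 1 := ⟨n-1, by omega⟩
      have e : m + 1 - 1 = m := by omega
      rw [e]
      have h1 : ((m.factorial:ℝ)) ≠ 0 := by positivity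
      have h2 : (((m+1).factorial:ℝ)) ≠ 0 := by positivity
      rw [show (-x) = (-1)*x by ring, show ((-2)*x : ℝ) = (-2)*x by ring,
        mul_pow, mul_pow]
      field_simp
      ring
  have hgfun : (fun n : ℕ => betaCoeff (n+1) * x^(n+1))
      = fun n => 2*x*((-x)^n/n.factorial) - 2*x*((-2*x)^n/n.factorial)
        - (if n = 0 then 0 else 2*x^2*((-2*x)^(n-1)/(n-1).factorial)) := funext hg
  have S1 : Summable (fun n : ℕ => 2*x*((-x)^n/n.factorial)) :=
    (Real.summable_pow_div_factorial (-x)).mul_left _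
  have S2 : Summable (fun n : ℕ => 2*x*((-2*x)^n/n.factorial)) :=
    (Real.summable_pow_div_factorial (-2*x)).mul_left _
  have Sw : Summable (fun n : ℕ => 2*x^2*((-2*x)^n/n.factorial)) :=
    (Real.summable_pow_div_factorial (-2*x)).mul_left _
  have S3 : Summable (fun n : ℕ =>
      (if n = 0 then (0:ℝ) else 2*x^2*((-2*x)^(n-1)/(n-1).factorial))) := by
    rw [← summable_nat_add_iff 1]
    simpa using Sw
  have Sg : Summable (fun n : ℕ => betaCoeff (n+1)*x^(n+1)) := by
    rw [hgfun]; exact (S1.sub S2).sub S3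
  refine ⟨summable_abs_iff.mpr Sg, ?_⟩
  have T3 : (∑' n : ℕ, (if n = 0 then (0:ℝ)
      else 2*x^2*((-2*x)^(n-1)/(n-1).factorial))) = 2*x^2*Real.exp (-2*x) := by
    rw [Summable.tsum_eq_zero_add S3]
    simp only [Nat.add_sub_cancel, if_neg (Nat.succ_ne_zero _), if_pos rfl, zero_add]
    rw [tsum_mul_left, expf]
    norm_num
  calc ∑' n : ℕ, betaCoeff (n+1) * x^(n+1)
      = ∑' n : ℕ, (2*x*((-x)^n/n.factorial) - 2*x*((-2*x)^n/n.factorial)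
        - (if n = 0 then 0 else 2*x^2*((-2*x)^(n-1)/(n-1).factorial))) := by
        rw [hgfun]
    _ = (∑' n : ℕ, (2*x*((-x)^n/n.factorial) - 2*x*((-2*x)^n/n.factorial)))
        - ∑' n : ℕ, (if n = 0 then (0:ℝ)
            else 2*x^2*((-2*x)^(n-1)/(n-1).factorial)) := Summable.tsum_sub (S1.sub S2) S3
    _ = (∑' n : ℕ, 2*x*((-x)^n/n.factorial)) - (∑' n : ℕ, 2*x*((-2*x)^n/n.factorial))
        - 2*x^2*Real.exp (-2*x) := by rw [Summable.tsum_sub S1 S2, T3]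
    _ = 2*x*Real.exp (-x) - 2*x*Real.exp (-2*x) - 2*x^2*Real.exp (-2*x) := by
        rw [tsum_mul_left, tsum_mul_left, expf, expf]
    _ = 2 * x * Real.exp (-x) - 2 * (x + x ^ 2) * Real.exp (-(2 * x)) := by
        rw [show (-(2*x) : ℝ) = -2*x by ring]; ring
end

section
/- For every integer n ≥ 1: ∑_{j=1}^{n} C(n,j) ( C(j−1, n−j) − C(j−1, n−j−1) ) = (−1)^{n+1}, where C(p,q) denotes the binomial coefficient, with the convention C(p,q) = 0 whenever q < 0 or q > p. -/
/-- Binomial coefficient `C(p, q)` for an integer lower index, with the convention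
`C(p, q) = 0` whenever `q < 0` (and, via `Nat.choose`, whenever `q > p`). -/
def chooseZ (p : ℕ) (q : ℤ) : ℤ := if 0 ≤ q then (p.choose q.toNat : ℤ) else 0


lemma chooseZ_natCast (p k : ℕ) : chooseZ p (k : ℤ) = (p.choose k : ℤ) := by
  simp [chooseZ]

lemma chooseZ_neg {q : ℤ} (p : ℕ) (h : q < 0) : chooseZ p q = 0 := by
  simp [chooseZ, not_le.mpr h]

lemma keyZ (b c : ℕ) :
    ((b+c+2).choose (b+2) * (b+2).choose (c+1) : ℤ)
      = ((b+c+2).choose (b+1) * (b+1).choose c : ℤ) := by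
  have h1 := Nat.choose_succ_right_eq (b+c+2) (b+1)
  have h2 := Nat.add_one_mul_choose_eq (b+1) c
  have e : b+c+2 - (b+1) = c+1 := by omega
  rw [e] at h1
  have h1' : ((b+c+2).choose (b+2) : ℤ) * (b+2) = ((b+c+2).choose (b+1) : ℤ) * (c+1) := by
    exact_mod_cast h1
  have h2' : ((b:ℤ)+2) * ((b+1).choose c : ℤ) = ((b+2).choose (c+1) : ℤ) * (c+1) := by
    exact_mod_cast h2
  have hnz : ((b:ℤ)+2) * ((c:ℤ)+1) ≠ 0 := by positivity
  apply mul_right_cancel₀ hnz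
  linear_combination (((b+2).choose (c+1) : ℤ) * ((c:ℤ)+1)) * h1'
    - ((b+c+2).choose (b+1) : ℤ) * ((c:ℤ)+1) * h2'

lemma core (b c : ℕ) :
    ((b+c+2).choose (b+1) : ℤ) * ((b.choose (c+1) : ℤ) - (b.choose c : ℤ))
      + ((b+c+2+1).choose (b+1+1) : ℤ) * (((b+1).choose (c+1) : ℤ) - ((b+1).choose c : ℤ))
      = 2 * ((b+c+2).choose (b+1) : ℤ) * (b.choose (c+1) : ℤ)
        - 2 * ((b+c+2).choose (b+1+1) : ℤ) * ((b+1).choose c : ℤ) := by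
  have p1 : ((b+c+2+1).choose (b+1+1) : ℤ)
      = (b+c+2).choose (b+1) + (b+c+2).choose (b+1+1) := by
    exact_mod_cast congrArg (Nat.cast (R := ℤ)) (Nat.choose_succ_succ (b+c+2) (b+1))
  have p2 : (((b+1).choose (c+1)) : ℤ) = b.choose c + b.choose (c+1) := by
    exact_mod_cast congrArg (Nat.cast (R := ℤ)) (Nat.choose_succ_succ b c)
  have p3 : (((b+2).choose (c+1)) : ℤ) = (b+1).choose c + (b+1).choose (c+1) := by
    exact_mod_cast congrArg (Nat.cast (R := ℤ)) (Nat.choose_succ_succ (b+1) c)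
  have k := keyZ b c
  have hb : ((b+1+1 : ℕ)) = b + 2 := by omega
  rw [hb] at *
  linear_combination ((((b+1).choose (c+1) : ℤ)) - (((b+1).choose c : ℤ))) * p1
    + ((b+c+2).choose (b+1) : ℤ) * p2
    - ((b+c+2).choose (b+2) : ℤ) * p3 + k

def T (n j : ℕ) : ℤ :=
  (n.choose j : ℤ) * (chooseZ (j - 1) ((n : ℤ) - j) - chooseZ (j - 1) ((n : ℤ) - j - 1))

def Gf (n j : ℕ) : ℤ := -(T (n+1) j) - 2 * (n.choose j : ℤ) * chooseZ (j - 1) ((n : ℤ) - j)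

lemma main_id (n j : ℕ) (h1 : 1 ≤ j) (h2 : j ≤ n + 1) :
    T n j + T (n+1) (j+1)
      = 2 * (n.choose j : ℤ) * chooseZ (j-1) ((n:ℤ) - j)
        - 2 * (n.choose (j+1) : ℤ) * chooseZ j ((n:ℤ) - j - 1) := by
  rcases (by omega : j + 1 ≤ n ∨ j = n ∨ j = n + 1) with h | h | h
  · obtain ⟨b, rfl⟩ : ∃ b, j = b + 1 := ⟨j - 1, by omega⟩
    obtain ⟨c, rfl⟩ : ∃ c, n = b + c + 2 := ⟨n - b - 2, by omega⟩
    have e2 : ((b+c+2 : ℕ) : ℤ) - ((b+1 : ℕ) : ℤ) - 1 = ((c : ℕ) : ℤ) := by push_cast; ring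
    have e4 : ((b+c+2+1 : ℕ) : ℤ) - ((b+1+1 : ℕ) : ℤ) - 1 = ((c : ℕ) : ℤ) := by push_cast; ring
    have e1 : ((b+c+2 : ℕ) : ℤ) - ((b+1 : ℕ) : ℤ) = ((c+1 : ℕ) : ℤ) := by push_cast; ring
    have e3 : ((b+c+2+1 : ℕ) : ℤ) - ((b+1+1 : ℕ) : ℤ) = ((c+1 : ℕ) : ℤ) := by push_cast; ring
    simp only [T, Nat.add_sub_cancel]
    rw [e2, e4, e1, e3, chooseZ_natCast, chooseZ_natCast, chooseZ_natCast, chooseZ_natCast]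
    exact core b c
  · subst h
    have g2 : chooseZ (j-1) ((j:ℤ) - j - 1) = 0 := by apply chooseZ_neg; omega
    have g4 : chooseZ (j+1-1) (((j+1:ℕ):ℤ) - ((j+1:ℕ):ℤ) - 1) = 0 := by
      apply chooseZ_neg; omega
    have g5 : chooseZ j ((j:ℤ) - j - 1) = 0 := by apply chooseZ_neg; omega
    have g1 : chooseZ (j-1) ((j:ℤ) - j) = 1 := by simp [chooseZ]
    have g3 : chooseZ (j+1-1) (((j+1:ℕ):ℤ) - ((j+1:ℕ):ℤ)) = 1 := by simp [chooseZ]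
    simp only [T]
    rw [g2, g4, g5, g1, g3]
    simp [Nat.choose_self, Nat.choose_succ_self]
  · subst h
    simp [T, Nat.choose_succ_self,
      Nat.choose_eq_zero_of_lt (show n < n+1+1 by omega)]

lemma step (n j : ℕ) (h1 : 1 ≤ j) (h2 : j ≤ n + 1) :
    T (n+1) j + T n j = Gf n (j+1) - Gf n j := by
  have e : ((n:ℤ) - ((j:ℕ)+1 : ℕ)) = (n:ℤ) - j - 1 := by push_cast; ring
  have hm := main_id n j h1 h2
  simp only [Gf, Nat.add_sub_cancel, e]
  linarith [hm]

lemma Gf_top (n : ℕ) : Gf n (n+1+1) = 0 := by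
  simp [Gf, T, Nat.choose_succ_self,
    Nat.choose_eq_zero_of_lt (show n < n+1+1 by omega)]

lemma Gf_bot (n : ℕ) (hn : 1 ≤ n) : Gf n 1 = 0 := by
  rcases (by omega : n = 1 ∨ 2 ≤ n) with rfl | h
  · norm_num [Gf, T, chooseZ]
  · obtain ⟨m, rfl⟩ : ∃ m, n = m + 2 := ⟨n - 2, by omega⟩
    have e1 : ((m+2+1:ℕ):ℤ) - ((1:ℕ):ℤ) - 1 = ((m+1:ℕ):ℤ) := by push_cast; ring
    have e2 : ((m+2+1:ℕ):ℤ) - ((1:ℕ):ℤ) = ((m+2:ℕ):ℤ) := by push_cast; ring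
    have e3 : ((m+2:ℕ):ℤ) - ((1:ℕ):ℤ) = ((m+1:ℕ):ℤ) := by push_cast; ring
    simp only [Gf, T]
    rw [e1, e2, e3]
    simp only [chooseZ_natCast]
    simp

lemma S_succ (n : ℕ) (hn : 1 ≤ n) :
    (∑ j ∈ Finset.Icc 1 (n+1), T (n+1) j) = - ∑ j ∈ Finset.Icc 1 n, T n j := by
  have hextend : (∑ j ∈ Finset.Icc 1 n, T n j) = ∑ j ∈ Finset.Icc 1 (n+1), T n j := by
    rw [Finset.sum_Icc_succ_top (by omega : 1 ≤ n+1)]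
    have hz : T n (n+1) = 0 := by simp [T, Nat.choose_succ_self]
    rw [hz, add_zero]
  have key : (∑ j ∈ Finset.Icc 1 (n+1), T (n+1) j) + ∑ j ∈ Finset.Icc 1 (n+1), T n j = 0 := by
    rw [← Finset.sum_add_distrib]
    rw [← Finset.Ico_add_one_right_eq_Icc, Finset.sum_Ico_eq_sum_range]
    have hr : n + 1 + 1 - 1 = n + 1 := rfl
    rw [hr]
    have hterm : ∀ i ∈ Finset.range (n+1),
        T (n+1) (1+i) + T n (1+i) = (fun i => Gf n (i+1)) (i+1) - (fun i => Gf n (i+1)) i := by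
      intro i hi
      have hi' := Finset.mem_range.mp hi
      have h := step n (i+1) (by omega) (by omega)
      simp only [show 1+i = i+1 by omega]
      simpa using h
    rw [Finset.sum_congr rfl hterm, Finset.sum_range_sub (fun i => Gf n (i+1))]
    simp [Gf_top n, Gf_bot n hn]
  linarith [key, hextend]

/-- For every `n ≥ 1`,
`∑_{j=1}^{n} C(n,j) (C(j−1, n−j) − C(j−1, n−j−1)) = (−1)^{n+1}`,
with the convention `C(p,q) = 0` when `q < 0` or `q > p`. -/
theorem binomial_telescoping_identity (n : ℕ) (hn : 1 ≤ n) :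
    ∑ j ∈ Finset.Icc 1 n,
      (n.choose j : ℤ) *
        (chooseZ (j - 1) ((n : ℤ) - j) - chooseZ (j - 1) ((n : ℤ) - j - 1))
      = (-1) ^ (n + 1) := by
  have main : ∀ m : ℕ, 1 ≤ m → (∑ j ∈ Finset.Icc 1 m, T m j) = (-1) ^ (m + 1) := by
    intro m hm
    induction m, hm using Nat.le_induction with
    | base => norm_num [T, chooseZ]
    | succ k hk ih => rw [S_succ k hk, ih]; ring
  exact main n hn
end
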